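/- For 0 < q < 1 and natural numbers n, m ≥ 2, the q-multiple zeta values z_q(n_1,...,n_k) := (1−q)^{n_1+...+n_k} \bar{z}_q(n_1,...,n_k) satisfy: z_q(n)·z_q(m) = z_q(n,m) + z_q(m,n) + z_q(n+m) − (1−q)( z_q(n,m−1) + z_q(m,n−1) + z_q(n+m−1) ). -/

import Mathlib

/-- Modified qMZV of length one: `z̄_q(n) = ∑_{m>0} qᵐ/(1−qᵐ)ⁿ`. -/
noncomputable def zbar1 (q : ℝ) (n : ℕ) : ℝ := ∑' m : ℕ, q ^ (m + 1) / (1 - q ^ (m + 1)) ^ n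

/-- Modified qMZV of length two. -/
noncomputable def zbar2 (q : ℝ) (a b : ℕ) : ℝ :=
  ∑' p : ℕ × ℕ, if p.2 < p.1 ∧ 0 < p.2 then
    q ^ p.1 / ((1 - q ^ p.1) ^ a * (1 - q ^ p.2) ^ b) else 0

/-- The qMZV `z_q(n) = (1−q)ⁿ z̄_q(n)`. -/
noncomputable def zq1 (q : ℝ) (n : ℕ) : ℝ := (1 - q) ^ n * zbar1 q n

/-- The qMZV `z_q(a,b) = (1−q)^{a+b} z̄_q(a,b)`. -/
noncomputable def zq2 (q : ℝ) (a b : ℕ) : ℝ := (1 - q) ^ (a + b) * zbar2 q a b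

variable {q : ℝ}

lemma qs_den_pos (hq0 : 0 < q) (hq1 : q < 1) {a : ℕ} (ha : 0 < a) : 0 < 1 - q ^ a := by
  have : q ^ a < 1 := pow_lt_one₀ hq0.le hq1 ha.ne'
  linarith

lemma qs_den_ge (hq0 : 0 < q) (hq1 : q < 1) {a : ℕ} (ha : 0 < a) : 1 - q ≤ 1 - q ^ a := by
  have : q ^ a ≤ q := pow_le_of_le_one hq0.le hq1.le ha.ne'
  linarith

lemma qs_sum1 (hq0 : 0 < q) (hq1 : q < 1) (n : ℕ) :
    Summable (fun i : ℕ => q ^ (i + 1) / (1 - q ^ (i + 1)) ^ n) := by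
  have h1q : (0:ℝ) < 1 - q := by linarith
  refine Summable.of_nonneg_of_le (f := fun i : ℕ => (q / (1 - q) ^ n) * q ^ i) ?_ ?_ ?_
  · intro i
    have := qs_den_pos hq0 hq1 (Nat.succ_pos i)
    positivity
  · intro i
    have hd := qs_den_pos hq0 hq1 (Nat.succ_pos i)
    have hle : (1 - q) ^ n ≤ (1 - q ^ (i + 1)) ^ n :=
      pow_le_pow_left₀ h1q.le (qs_den_ge hq0 hq1 (Nat.succ_pos i)) n
    have h1 : q ^ (i + 1) / (1 - q ^ (i + 1)) ^ n ≤ q ^ (i + 1) / (1 - q) ^ n :=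
      div_le_div_of_nonneg_left (by positivity) (by positivity) hle
    calc q ^ (i + 1) / (1 - q ^ (i + 1)) ^ n ≤ q ^ (i + 1) / (1 - q) ^ n := h1
      _ = (q / (1 - q) ^ n) * q ^ i := by rw [pow_succ]; ring
  · exact (summable_geometric_of_lt_one hq0.le hq1).mul_left _

lemma qs_sumcond (hq0 : 0 < q) (hq1 : q < 1) :
    Summable (fun p : ℕ × ℕ => if p.2 < p.1 then q ^ p.1 else 0) := by
  rw [summable_prod_of_nonneg (by intro p; dsimp only; split <;> positivity)]
  constructor
  · intro a
    apply summable_of_ne_finset_zero (s := Finset.range a)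
    intro b hb
    simp only [Finset.mem_range, not_lt] at hb
    simp [Nat.not_lt.mpr hb]
  · have key : ∀ a : ℕ, (∑' b : ℕ, if b < a then q ^ a else 0) = (a : ℝ) * q ^ a := by
      intro a
      rw [tsum_eq_sum (s := Finset.range a) (by
        intro b hb
        simp only [Finset.mem_range, not_lt] at hb
        simp [Nat.not_lt.mpr hb])]
      rw [Finset.sum_congr rfl (fun b hb => if_pos (Finset.mem_range.mp hb)),
        Finset.sum_const, Finset.card_range, nsmul_eq_mul]
    simp only [key]
    have := summable_pow_mul_geometric_of_norm_lt_one (R := ℝ) 1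
      (r := q) (by rwa [Real.norm_of_nonneg hq0.le])
    simpa using this


/-- Integrand of `zbar2`. -/
noncomputable def zZ (q : ℝ) (a b : ℕ) (p : ℕ × ℕ) : ℝ :=
  if p.2 < p.1 ∧ 0 < p.2 then q ^ p.1 / ((1 - q ^ p.1) ^ a * (1 - q ^ p.2) ^ b) else 0

/-- Integrand with extra factor `q ^ p.2`. -/
noncomputable def zH (q : ℝ) (a b : ℕ) (p : ℕ × ℕ) : ℝ :=
  if p.2 < p.1 ∧ 0 < p.2 then q ^ p.1 * q ^ p.2 / ((1 - q ^ p.1) ^ a * (1 - q ^ p.2) ^ b) else 0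

lemma zbar2_eq (q : ℝ) (a b : ℕ) : zbar2 q a b = ∑' p : ℕ × ℕ, zZ q a b p := rfl

lemma zZ_nonneg (hq0 : 0 < q) (hq1 : q < 1) (a b : ℕ) (p : ℕ × ℕ) : 0 ≤ zZ q a b p := by
  unfold zZ
  split_ifs with h
  · have h1 := qs_den_pos hq0 hq1 (h.2.trans h.1)
    have h2 := qs_den_pos hq0 hq1 h.2
    positivity
  · exact le_refl 0

lemma zH_nonneg (hq0 : 0 < q) (hq1 : q < 1) (a b : ℕ) (p : ℕ × ℕ) : 0 ≤ zH q a b p := by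
  unfold zH
  split_ifs with h
  · have h1 := qs_den_pos hq0 hq1 (h.2.trans h.1)
    have h2 := qs_den_pos hq0 hq1 h.2
    positivity
  · exact le_refl 0

lemma qs_sumZ (hq0 : 0 < q) (hq1 : q < 1) (a b : ℕ) : Summable (zZ q a b) := by
  have h1q : (0:ℝ) < 1 - q := by linarith
  refine Summable.of_nonneg_of_le (zZ_nonneg hq0 hq1 a b) ?_
    (((qs_sumcond hq0 hq1)).mul_left ((1 - q) ^ (a + b))⁻¹)
  intro p
  by_cases h : p.2 < p.1 ∧ 0 < p.2
  · rw [zZ, if_pos h, if_pos h.1, inv_mul_eq_div]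
    have h1 := qs_den_pos hq0 hq1 (h.2.trans h.1)
    have h2 := qs_den_pos hq0 hq1 h.2
    have hle : (1 - q) ^ (a + b) ≤ (1 - q ^ p.1) ^ a * (1 - q ^ p.2) ^ b := by
      rw [pow_add]
      exact mul_le_mul (pow_le_pow_left₀ h1q.le (qs_den_ge hq0 hq1 (h.2.trans h.1)) a)
        (pow_le_pow_left₀ h1q.le (qs_den_ge hq0 hq1 h.2) b) (by positivity) (by positivity)
    exact div_le_div_of_nonneg_left (by positivity) (by positivity) hle
  · rw [zZ, if_neg h]
    split_ifs with h2
    · positivity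
    · simp

lemma qs_sumH (hq0 : 0 < q) (hq1 : q < 1) (a b : ℕ) : Summable (zH q a b) := by
  refine Summable.of_nonneg_of_le (zH_nonneg hq0 hq1 a b) ?_ (qs_sumZ hq0 hq1 a b)
  intro p
  by_cases h : p.2 < p.1 ∧ 0 < p.2
  · rw [zH, zZ, if_pos h, if_pos h]
    have h1 := qs_den_pos hq0 hq1 (h.2.trans h.1)
    have h2 := qs_den_pos hq0 hq1 h.2
    have hD : (0:ℝ) < (1 - q ^ p.1) ^ a * (1 - q ^ p.2) ^ b := by positivity
    have hnum : q ^ p.1 * q ^ p.2 ≤ q ^ p.1 := by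
      nth_rewrite 2 [← mul_one (q ^ p.1)]
      exact mul_le_mul_of_nonneg_left (pow_le_one₀ hq0.le hq1.le) (by positivity)
    exact (div_le_div_iff_of_pos_right hD).mpr hnum
  · rw [zH, zZ, if_neg h, if_neg h]

lemma zH_eq_sub (hq0 : 0 < q) (hq1 : q < 1) (a b : ℕ) (p : ℕ × ℕ) :
    zH q a (b + 1) p = zZ q a (b + 1) p - zZ q a b p := by
  unfold zH zZ
  split_ifs with h
  · have h1 := (qs_den_pos hq0 hq1 (h.2.trans h.1)).ne'
    have h2 := (qs_den_pos hq0 hq1 h.2).ne'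
    have hA : (1 - q ^ p.1) ^ a ≠ 0 := pow_ne_zero _ h1
    have hB : (1 - q ^ p.2) ^ b ≠ 0 := pow_ne_zero _ h2
    field_simp
    ring
  · ring

lemma tsum_zH (hq0 : 0 < q) (hq1 : q < 1) (a b : ℕ) :
    ∑' p : ℕ × ℕ, zH q a (b + 1) p = zbar2 q a (b + 1) - zbar2 q a b := by
  rw [zbar2_eq, zbar2_eq, ← Summable.tsum_sub (qs_sumZ hq0 hq1 a (b + 1)) (qs_sumZ hq0 hq1 a b)]
  exact tsum_congr (zH_eq_sub hq0 hq1 a b)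

lemma qs_diag (hq0 : 0 < q) (hq1 : q < 1) (c : ℕ) :
    ∑' k : ℕ, q ^ (k + 1) * q ^ (k + 1) / (1 - q ^ (k + 1)) ^ (c + 1)
      = zbar1 q (c + 1) - zbar1 q c := by
  rw [zbar1, zbar1, ← Summable.tsum_sub (qs_sum1 hq0 hq1 (c + 1)) (qs_sum1 hq0 hq1 c)]
  refine tsum_congr fun k => ?_
  have hA : (1 - q ^ (k + 1)) ≠ 0 := (qs_den_pos hq0 hq1 (Nat.succ_pos k)).ne'
  field_simp
  ring

set_option maxHeartbeats 2000000 in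
lemma zbar_qs (hq0 : 0 < q) (hq1 : q < 1) (a b : ℕ) :
    zbar1 q (a + 1) * zbar1 q (b + 1) =
      (zbar2 q (a + 1) (b + 1) - zbar2 q (a + 1) b)
      + (zbar2 q (b + 1) (a + 1) - zbar2 q (b + 1) a)
      + (zbar1 q (a + b + 2) - zbar1 q (a + b + 1)) := by
  have hf := qs_sum1 hq0 hq1 (a + 1)
  have hg := qs_sum1 hq0 hq1 (b + 1)
  have hfnn : ∀ i : ℕ, 0 ≤ q ^ (i + 1) / (1 - q ^ (i + 1)) ^ (a + 1) := fun i => by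
    have := qs_den_pos hq0 hq1 (Nat.succ_pos i); positivity
  have hgnn : ∀ i : ℕ, 0 ≤ q ^ (i + 1) / (1 - q ^ (i + 1)) ^ (b + 1) := fun i => by
    have := qs_den_pos hq0 hq1 (Nat.succ_pos i); positivity
  have hF : Summable (fun p : ℕ × ℕ =>
      (q ^ (p.1 + 1) / (1 - q ^ (p.1 + 1)) ^ (a + 1))
        * (q ^ (p.2 + 1) / (1 - q ^ (p.2 + 1)) ^ (b + 1))) :=
    hf.mul_of_nonneg hg hfnn hgnn
  have hFnn : ∀ p : ℕ × ℕ, 0 ≤ (q ^ (p.1 + 1) / (1 - q ^ (p.1 + 1)) ^ (a + 1))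
        * (q ^ (p.2 + 1) / (1 - q ^ (p.2 + 1)) ^ (b + 1)) :=
    fun p => mul_nonneg (hfnn p.1) (hgnn p.2)
  -- product of the two series
  have hprod : zbar1 q (a + 1) * zbar1 q (b + 1) = ∑' p : ℕ × ℕ,
      (q ^ (p.1 + 1) / (1 - q ^ (p.1 + 1)) ^ (a + 1))
        * (q ^ (p.2 + 1) / (1 - q ^ (p.2 + 1)) ^ (b + 1)) := by
    refine tsum_mul_tsum_of_summable_norm ?_ ?_
    · refine (summable_congr fun i => ?_).mpr hf
      rw [Real.norm_of_nonneg (hfnn i)]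
    · refine (summable_congr fun i => ?_).mpr hg
      rw [Real.norm_of_nonneg (hgnn i)]
  -- the three pieces
  have hG1 : Summable (fun p : ℕ × ℕ => if p.2 < p.1 then
      (q ^ (p.1 + 1) / (1 - q ^ (p.1 + 1)) ^ (a + 1))
        * (q ^ (p.2 + 1) / (1 - q ^ (p.2 + 1)) ^ (b + 1)) else 0) := by
    refine Summable.of_nonneg_of_le (fun p => ?_) (fun p => ?_) hF
    · split_ifs with h; exacts [hFnn p, le_refl 0]
    · split_ifs with h; exacts [le_refl _, hFnn p]
  have hG2 : Summable (fun p : ℕ × ℕ => if p.1 < p.2 then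
      (q ^ (p.1 + 1) / (1 - q ^ (p.1 + 1)) ^ (a + 1))
        * (q ^ (p.2 + 1) / (1 - q ^ (p.2 + 1)) ^ (b + 1)) else 0) := by
    refine Summable.of_nonneg_of_le (fun p => ?_) (fun p => ?_) hF
    · split_ifs with h; exacts [hFnn p, le_refl 0]
    · split_ifs with h; exacts [le_refl _, hFnn p]
  have hG3 : Summable (fun p : ℕ × ℕ => if p.1 = p.2 then
      (q ^ (p.1 + 1) / (1 - q ^ (p.1 + 1)) ^ (a + 1))
        * (q ^ (p.2 + 1) / (1 - q ^ (p.2 + 1)) ^ (b + 1)) else 0) := by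
    refine Summable.of_nonneg_of_le (fun p => ?_) (fun p => ?_) hF
    · split_ifs with h; exacts [hFnn p, le_refl 0]
    · split_ifs with h; exacts [le_refl _, hFnn p]
  -- splitting the double sum
  have hsplit : (∑' p : ℕ × ℕ,
      (q ^ (p.1 + 1) / (1 - q ^ (p.1 + 1)) ^ (a + 1))
        * (q ^ (p.2 + 1) / (1 - q ^ (p.2 + 1)) ^ (b + 1)))
      = (∑' p : ℕ × ℕ, if p.2 < p.1 then
          (q ^ (p.1 + 1) / (1 - q ^ (p.1 + 1)) ^ (a + 1))
            * (q ^ (p.2 + 1) / (1 - q ^ (p.2 + 1)) ^ (b + 1)) else 0)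
        + (∑' p : ℕ × ℕ, if p.1 < p.2 then
          (q ^ (p.1 + 1) / (1 - q ^ (p.1 + 1)) ^ (a + 1))
            * (q ^ (p.2 + 1) / (1 - q ^ (p.2 + 1)) ^ (b + 1)) else 0)
        + (∑' p : ℕ × ℕ, if p.1 = p.2 then
          (q ^ (p.1 + 1) / (1 - q ^ (p.1 + 1)) ^ (a + 1))
            * (q ^ (p.2 + 1) / (1 - q ^ (p.2 + 1)) ^ (b + 1)) else 0) := by
    rw [← Summable.tsum_add hG1 hG2, ← Summable.tsum_add (hG1.add hG2) hG3]
    refine tsum_congr fun p => ?_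
    rcases lt_trichotomy p.1 p.2 with h | h | h
    · simp [h, lt_asymm h, h.ne]
    · simp [h, lt_irrefl]
    · simp [h, lt_asymm h, h.ne']
  -- identify piece 1 with zH (a+1) (b+1)
  have hshift : Function.Injective (fun x : ℕ × ℕ => ((x.1 + 1, x.2 + 1) : ℕ × ℕ)) := by
    intro x y h
    simp only [Prod.mk.injEq, Nat.add_right_cancel_iff] at h
    exact Prod.ext h.1 h.2
  have hpiece1 : (∑' p : ℕ × ℕ, if p.2 < p.1 then
      (q ^ (p.1 + 1) / (1 - q ^ (p.1 + 1)) ^ (a + 1))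
        * (q ^ (p.2 + 1) / (1 - q ^ (p.2 + 1)) ^ (b + 1)) else 0)
      = ∑' p : ℕ × ℕ, zH q (a + 1) (b + 1) p := by
    rw [← hshift.tsum_eq (f := zH q (a + 1) (b + 1)) ?_]
    · refine tsum_congr fun x => ?_
      unfold zH
      simp only [Nat.add_lt_add_iff_right, Nat.succ_pos, and_true]
      split_ifs with h
      · rw [div_mul_div_comm]
      · rfl
    · intro p hp
      rw [Function.mem_support, zH] at hp
      by_cases h : p.2 < p.1 ∧ 0 < p.2
      · refine ⟨(p.1 - 1, p.2 - 1), ?_⟩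
        show (p.1 - 1 + 1, p.2 - 1 + 1) = p
        rw [Prod.ext_iff]
        exact ⟨by omega, by omega⟩
      · exact absurd (if_neg h) hp
  have hpiece2 : (∑' p : ℕ × ℕ, if p.1 < p.2 then
      (q ^ (p.1 + 1) / (1 - q ^ (p.1 + 1)) ^ (a + 1))
        * (q ^ (p.2 + 1) / (1 - q ^ (p.2 + 1)) ^ (b + 1)) else 0)
      = ∑' p : ℕ × ℕ, zH q (b + 1) (a + 1) p := by
    rw [← hshift.tsum_eq (f := zH q (b + 1) (a + 1)) ?_]
    · rw [← (Equiv.prodComm ℕ ℕ).tsum_eq (f := fun p : ℕ × ℕ => if p.1 < p.2 then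
        (q ^ (p.1 + 1) / (1 - q ^ (p.1 + 1)) ^ (a + 1))
          * (q ^ (p.2 + 1) / (1 - q ^ (p.2 + 1)) ^ (b + 1)) else 0)]
      refine tsum_congr fun x => ?_
      unfold zH
      simp only [Equiv.prodComm_apply, Prod.fst_swap, Prod.snd_swap,
        Nat.add_lt_add_iff_right, Nat.succ_pos, and_true]
      split_ifs with h
      · rw [div_mul_div_comm, mul_comm (q ^ (x.2 + 1)), mul_comm ((1 - q ^ (x.2 + 1)) ^ (a + 1))]
        exact if_pos h
      · exact if_neg h
    · intro p hp
      rw [Function.mem_support, zH] at hp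
      by_cases h : p.2 < p.1 ∧ 0 < p.2
      · refine ⟨(p.1 - 1, p.2 - 1), ?_⟩
        show (p.1 - 1 + 1, p.2 - 1 + 1) = p
        rw [Prod.ext_iff]
        exact ⟨by omega, by omega⟩
      · exact absurd (if_neg h) hp
  have hdiaginj : Function.Injective (fun k : ℕ => ((k, k) : ℕ × ℕ)) := by
    intro x y h
    simpa using congrArg Prod.fst h
  have hpiece3 : (∑' p : ℕ × ℕ, if p.1 = p.2 then
      (q ^ (p.1 + 1) / (1 - q ^ (p.1 + 1)) ^ (a + 1))
        * (q ^ (p.2 + 1) / (1 - q ^ (p.2 + 1)) ^ (b + 1)) else 0)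
      = ∑' k : ℕ, q ^ (k + 1) * q ^ (k + 1) / (1 - q ^ (k + 1)) ^ (a + b + 2) := by
    rw [← hdiaginj.tsum_eq (f := fun p : ℕ × ℕ => if p.1 = p.2 then
      (q ^ (p.1 + 1) / (1 - q ^ (p.1 + 1)) ^ (a + 1))
        * (q ^ (p.2 + 1) / (1 - q ^ (p.2 + 1)) ^ (b + 1)) else 0) ?_]
    · refine tsum_congr fun k => ?_
      simp only [if_pos rfl]
      rw [div_mul_div_comm, ← pow_add]
      norm_num
      ring_nf
    · intro p hp
      rw [Function.mem_support] at hp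
      by_cases h : p.1 = p.2
      · exact ⟨p.1, Prod.ext rfl h⟩
      · exact absurd (if_neg h) hp
  rw [hprod, hsplit, hpiece1, hpiece2, hpiece3]
  have e1 := tsum_zH hq0 hq1 (a + 1) b
  have e2 := tsum_zH hq0 hq1 (b + 1) a
  have e3 := qs_diag hq0 hq1 (a + b + 1)
  rw [e1, e2]
  rw [show a + b + 1 + 1 = a + b + 2 from rfl] at e3
  rw [e3]


/-- Quasi-shuffle identity for the qMZVs `z_q`. -/
theorem zq_quasi_shuffle (q : ℝ) (hq0 : 0 < q) (hq1 : q < 1) (n m : ℕ)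
    (hn : 2 ≤ n) (hm : 2 ≤ m) :
    zq1 q n * zq1 q m =
      zq2 q n m + zq2 q m n + zq1 q (n + m)
        - (1 - q) * (zq2 q n (m - 1) + zq2 q m (n - 1) + zq1 q (n + m - 1)) := by
  obtain ⟨a, rfl⟩ : ∃ a, n = a + 2 := ⟨n - 2, by omega⟩
  obtain ⟨b, rfl⟩ : ∃ b, m = b + 2 := ⟨m - 2, by omega⟩
  have key := zbar_qs hq0 hq1 (a + 1) (b + 1)
  have k1 : a + 1 + 1 = a + 2 := rfl
  have k2 : b + 1 + 1 = b + 2 := rfl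
  have k3 : a + 1 + (b + 1) + 2 = a + b + 4 := by omega
  have k4 : a + 1 + (b + 1) + 1 = a + b + 3 := by omega
  rw [k1, k2, k3, k4] at key
  have h1 : a + 2 + (b + 2) = a + b + 4 := by omega
  have h2 : a + 2 + (b + 2) - 1 = a + b + 3 := by omega
  have h3 : b + 2 - 1 = b + 1 := rfl
  have h4 : a + 2 - 1 = a + 1 := rfl
  have h5 : a + 2 + (b + 1) = a + b + 3 := by omega
  have h6 : b + 2 + (a + 1) = a + b + 3 := by omega
  have h7 : a + b + 4 - 1 = a + b + 3 := rfl
  simp only [zq1, zq2, h1, h2, h3, h4, h5, h6, h7]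
  linear_combination ((1 - q : ℝ) ^ (a + b + 4)) * key
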